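/- Suppose a state satisfies all shear components zero (Σ₊=Σ₋=Σ×=Σ₂=Σ₃=0) and the shear-free constraints: ΘV₁=0, ΘV₃=0, V₁V₃=0 together with 3·0²−2(N₋²+N×²)+V₃²−2V₁²=0 (from Σ₊'=0), √3(0)+2AN×−2N₋N₊−√3V₃²=0 (from Σ₋'=0), −2AN₋−2N₊N×=0 (from Σ×'=0), V₃(A−√3N×)=0, V₃(N₊−√3N₋)=0, and suppose V₃ > 0 (so Θ=V₁=0). Then A=√3N×, N₊=√3N₋, V₃²=2N×², and substituting, N₋=0, N₊=0, so A=√3N×>0 and V₃=√2·N×. -/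
import Mathlib


/-- Characterization of the shear-free set beyond FLRW: with V₃ > 0 (so Θ = V₁ = 0),
the shear-free constraints force A = √3 N×, N₊ = √3 N₋, V₃² = 2N×², N₋ = 0, N₊ = 0,
hence A = √3 N× > 0 and V₃ = √2·N×. (The sign convention A ≥ 0 is assumed.) -/
theorem stmt15 (Th V1 V3 A Np Nm Nx : ℝ)
    (hAconv : 0 ≤ A)
    (hTV1 : Th * V1 = 0) (hTV3 : Th * V3 = 0) (hV1V3 : V1 * V3 = 0)
    (hSp : 3 * (0 : ℝ) ^ 2 - 2 * (Nm ^ 2 + Nx ^ 2) + V3 ^ 2 - 2 * V1 ^ 2 = 0)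
    (hSm : Real.sqrt 3 * 0 + 2 * A * Nx - 2 * Nm * Np - Real.sqrt 3 * V3 ^ 2 = 0)
    (hSx : -2 * A * Nm - 2 * Np * Nx = 0)
    (hC1 : V3 * (A - Real.sqrt 3 * Nx) = 0)
    (hC2 : V3 * (Np - Real.sqrt 3 * Nm) = 0)
    (hV3 : V3 > 0) :
    Th = 0 ∧ V1 = 0 ∧
    A = Real.sqrt 3 * Nx ∧ Np = Real.sqrt 3 * Nm ∧
    V3 ^ 2 = 2 * Nx ^ 2 ∧ Nm = 0 ∧ Np = 0 ∧
    0 < A ∧ V3 = Real.sqrt 2 * Nx := by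
  have hV3ne : V3 ≠ 0 := ne_of_gt hV3
  have hTh : Th = 0 := by
    rcases mul_eq_zero.mp hTV3 with h | h
    · exact h
    · exact absurd h hV3ne
  have hV1 : V1 = 0 := by
    rcases mul_eq_zero.mp hV1V3 with h | h
    · exact h
    · exact absurd h hV3ne
  have hA : A = Real.sqrt 3 * Nx := by
    rcases mul_eq_zero.mp hC1 with h | h
    · exact absurd h hV3ne
    · linarith
  have hNp : Np = Real.sqrt 3 * Nm := by
    rcases mul_eq_zero.mp hC2 with h | h
    · exact absurd h hV3ne
    · linarith
  have h3 : Real.sqrt 3 ^ 2 = 3 := Real.sq_sqrt (by norm_num)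
  have h3pos : (0:ℝ) < Real.sqrt 3 := Real.sqrt_pos.mpr (by norm_num)
  have hVsq : V3 ^ 2 = 2 * Nm ^ 2 + 2 * Nx ^ 2 := by nlinarith [hSp, hV1]
  -- From hSm: 2√3 Nx² - 2√3 Nm² - √3 V3² = 0 → Nm = 0
  have hNm : Nm = 0 := by
    have : Real.sqrt 3 * (2 * Nx ^ 2 - 2 * Nm ^ 2 - V3 ^ 2) = 0 := by
      rw [hA, hNp] at hSm; nlinarith [hSm, h3]
    have h4 : 2 * Nx ^ 2 - 2 * Nm ^ 2 - V3 ^ 2 = 0 := by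
      rcases mul_eq_zero.mp this with h | h
      · exact absurd h (ne_of_gt h3pos)
      · exact h
    nlinarith [hVsq, h4, sq_nonneg Nm]
  have hNp0 : Np = 0 := by rw [hNp, hNm, mul_zero]
  have hVsq2 : V3 ^ 2 = 2 * Nx ^ 2 := by rw [hVsq, hNm]; ring
  have hNxpos : 0 < Nx := by
    have hNxn : 0 ≤ Nx := by
      by_contra h
      push_neg at h
      have : A < 0 := by rw [hA]; exact mul_neg_of_pos_of_neg h3pos h
      linarith
    rcases lt_or_eq_of_le hNxn with h | h
    · exact h
    · exfalso; rw [← h] at hVsq2; nlinarith [hV3]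
  have hApos : 0 < A := by rw [hA]; positivity
  have h2 : Real.sqrt 2 ^ 2 = 2 := Real.sq_sqrt (by norm_num)
  have hV3eq : V3 = Real.sqrt 2 * Nx := by
    have h2pos : (0:ℝ) < Real.sqrt 2 := Real.sqrt_pos.mpr (by norm_num)
    have hsum : 0 < V3 + Real.sqrt 2 * Nx := by positivity
    have hfac : (V3 - Real.sqrt 2 * Nx) * (V3 + Real.sqrt 2 * Nx) = 0 := by
      linear_combination hVsq2 - Nx ^ 2 * h2
    rcases mul_eq_zero.mp hfac with h | h
    · linarith
    · exact absurd h (ne_of_gt hsum)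
  exact ⟨hTh, hV1, hA, hNp, hVsq2, hNm, hNp0, hApos, hV3eq⟩
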